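/- arXiv:1403.2855 — 3 statements merged into one kernel-verified Lean document; each statement's English description precedes it below -/
import Mathlib

section
/- The homomorphism ι : SO(4) → SO(3)×SO(3), ι(a) = (a₊, a₋), is surjective: for every pair (g₊, g₋) of matrices in SO(3) there exists a ∈ SO(4) with a₊ = g₊ and a₋ = g₋. -/
noncomputable section

open ExteriorAlgebra Matrix

/-- The standard basis vectors of `ℝ⁴`. -/
def ε (i : Fin 4) : Fin 4 → ℝ := Pi.single i 1

/-- The standard basis `E₁⁺, E₂⁺, E₃⁺` of the self-dual part `Λ⁺` of `⋀²ℝ⁴`. -/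
def Ep : Fin 3 → ExteriorAlgebra ℝ (Fin 4 → ℝ)
  | 0 => (Real.sqrt 2)⁻¹ • (ι ℝ (ε 0) * ι ℝ (ε 1) + ι ℝ (ε 2) * ι ℝ (ε 3))
  | 1 => (Real.sqrt 2)⁻¹ • (ι ℝ (ε 0) * ι ℝ (ε 2) + ι ℝ (ε 3) * ι ℝ (ε 1))
  | 2 => (Real.sqrt 2)⁻¹ • (ι ℝ (ε 0) * ι ℝ (ε 3) + ι ℝ (ε 1) * ι ℝ (ε 2))

/-- The standard basis `E₁⁻, E₂⁻, E₃⁻` of the anti-self-dual part `Λ⁻` of `⋀²ℝ⁴`. -/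
def Em : Fin 3 → ExteriorAlgebra ℝ (Fin 4 → ℝ)
  | 0 => (Real.sqrt 2)⁻¹ • (ι ℝ (ε 0) * ι ℝ (ε 1) - ι ℝ (ε 2) * ι ℝ (ε 3))
  | 1 => (Real.sqrt 2)⁻¹ • (ι ℝ (ε 0) * ι ℝ (ε 2) - ι ℝ (ε 3) * ι ℝ (ε 1))
  | 2 => (Real.sqrt 2)⁻¹ • (ι ℝ (ε 0) * ι ℝ (ε 3) - ι ℝ (ε 1) * ι ℝ (ε 2))

/-- `Λ⁺`, the span of `E₁⁺, E₂⁺, E₃⁺`. -/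
def ΛPlus : Submodule ℝ (ExteriorAlgebra ℝ (Fin 4 → ℝ)) :=
  Submodule.span ℝ (Set.range Ep)

/-- `Λ⁻`, the span of `E₁⁻, E₂⁻, E₃⁻`. -/
def ΛMinus : Submodule ℝ (ExteriorAlgebra ℝ (Fin 4 → ℝ)) :=
  Submodule.span ℝ (Set.range Em)

/-! ### Auxiliary definitions -/

/-- unscaled versions of `Ep` -/
def vp : Fin 3 → ExteriorAlgebra ℝ (Fin 4 → ℝ)
  | 0 => ι ℝ (ε 0) * ι ℝ (ε 1) + ι ℝ (ε 2) * ι ℝ (ε 3)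
  | 1 => ι ℝ (ε 0) * ι ℝ (ε 2) + ι ℝ (ε 3) * ι ℝ (ε 1)
  | 2 => ι ℝ (ε 0) * ι ℝ (ε 3) + ι ℝ (ε 1) * ι ℝ (ε 2)

/-- unscaled versions of `Em` -/
def vm : Fin 3 → ExteriorAlgebra ℝ (Fin 4 → ℝ)
  | 0 => ι ℝ (ε 0) * ι ℝ (ε 1) - ι ℝ (ε 2) * ι ℝ (ε 3)
  | 1 => ι ℝ (ε 0) * ι ℝ (ε 2) - ι ℝ (ε 3) * ι ℝ (ε 1)
  | 2 => ι ℝ (ε 0) * ι ℝ (ε 3) - ι ℝ (ε 1) * ι ℝ (ε 2)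

lemma Ep_eq (j : Fin 3) : Ep j = (Real.sqrt 2)⁻¹ • vp j := by fin_cases j <;> rfl
lemma Em_eq (j : Fin 3) : Em j = (Real.sqrt 2)⁻¹ • vm j := by fin_cases j <;> rfl

theorem swapι (x y : Fin 4 → ℝ) : ι ℝ y * ι ℝ x = - (ι ℝ x * ι ℝ y) :=
  eq_neg_of_add_eq_zero_left (by rw [add_comm]; exact ι_add_mul_swap x y)

theorem swap10 : ι ℝ (ε 1) * ι ℝ (ε 0) = - (ι ℝ (ε 0) * ι ℝ (ε 1)) := swapι _ _
theorem swap20 : ι ℝ (ε 2) * ι ℝ (ε 0) = - (ι ℝ (ε 0) * ι ℝ (ε 2)) := swapι _ _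
theorem swap30 : ι ℝ (ε 3) * ι ℝ (ε 0) = - (ι ℝ (ε 0) * ι ℝ (ε 3)) := swapι _ _
theorem swap21 : ι ℝ (ε 2) * ι ℝ (ε 1) = - (ι ℝ (ε 1) * ι ℝ (ε 2)) := swapι _ _
theorem swap31 : ι ℝ (ε 3) * ι ℝ (ε 1) = - (ι ℝ (ε 1) * ι ℝ (ε 3)) := swapι _ _
theorem swap32 : ι ℝ (ε 3) * ι ℝ (ε 2) = - (ι ℝ (ε 2) * ι ℝ (ε 3)) := swapι _ _

lemma mulVecLin_eps (a : Matrix (Fin 4) (Fin 4) ℝ) (j : Fin 4) :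
    a.mulVecLin (ε j) = a 0 j • ε 0 + a 1 j • ε 1 + a 2 j • ε 2 + a 3 j • ε 3 := by
  funext i
  fin_cases i <;>
    simp [ε, Matrix.mulVecLin_apply, Matrix.mulVec_single, Pi.single_apply]

/-- rotation in 3-space about the third axis -/
def rz (C S : ℝ) : Matrix (Fin 3) (Fin 3) ℝ := !![C,-S,0; S,C,0; 0,0,1]
/-- rotation in 3-space about the second axis -/
def ry (C S : ℝ) : Matrix (Fin 3) (Fin 3) ℝ := !![C,0,S; 0,1,0; -S,0,C]

/-- generator of SO(4): rotation by equal angles in the (0,3) and (1,2) planes -/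
def P3 (c s : ℝ) : Matrix (Fin 4) (Fin 4) ℝ := !![c,0,0,-s; 0,c,-s,0; 0,s,c,0; s,0,0,c]
/-- generator of SO(4): rotation by opposite angles in the (0,3) and (1,2) planes -/
def M3 (c s : ℝ) : Matrix (Fin 4) (Fin 4) ℝ := !![c,0,0,-s; 0,c,s,0; 0,-s,c,0; s,0,0,c]
/-- generator of SO(4): rotation by equal angles in the (0,2) and (3,1) planes -/
def P2 (c s : ℝ) : Matrix (Fin 4) (Fin 4) ℝ := !![c,0,-s,0; 0,c,0,s; s,0,c,0; 0,-s,0,c]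
/-- generator of SO(4): rotation by opposite angles in the (0,2) and (3,1) planes -/
def M2 (c s : ℝ) : Matrix (Fin 4) (Fin 4) ℝ := !![c,0,-s,0; 0,c,0,-s; s,0,c,0; 0,s,0,c]

/-- the key property: `a ∈ SO(4)` induces `g` on `Λ⁺` and `m` on `Λ⁻` -/
def Good (a : Matrix (Fin 4) (Fin 4) ℝ) (g m : Matrix (Fin 3) (Fin 3) ℝ) : Prop :=
  aᵀ * a = 1 ∧ a.det = 1 ∧
    (∀ j, ExteriorAlgebra.map a.mulVecLin (Ep j) = ∑ i, g i j • Ep i) ∧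
    (∀ j, ExteriorAlgebra.map a.mulVecLin (Em j) = ∑ i, m i j • Em i)

lemma red_p (a : Matrix (Fin 4) (Fin 4) ℝ) (g : Matrix (Fin 3) (Fin 3) ℝ)
    (h : ∀ j, ExteriorAlgebra.map a.mulVecLin (vp j) = ∑ i, g i j • vp i) (j : Fin 3) :
    ExteriorAlgebra.map a.mulVecLin (Ep j) = ∑ i, g i j • Ep i := by
  simp only [Ep_eq, _root_.map_smul, h, Finset.smul_sum, smul_comm ((Real.sqrt 2)⁻¹)]

lemma red_m (a : Matrix (Fin 4) (Fin 4) ℝ) (g : Matrix (Fin 3) (Fin 3) ℝ)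
    (h : ∀ j, ExteriorAlgebra.map a.mulVecLin (vm j) = ∑ i, g i j • vm i) (j : Fin 3) :
    ExteriorAlgebra.map a.mulVecLin (Em j) = ∑ i, g i j • Em i := by
  simp only [Em_eq, _root_.map_smul, h, Finset.smul_sum, smul_comm ((Real.sqrt 2)⁻¹)]

lemma Good.mul {a b : Matrix (Fin 4) (Fin 4) ℝ} {g m g' m' : Matrix (Fin 3) (Fin 3) ℝ}
    (ha : Good a g m) (hb : Good b g' m') : Good (a * b) (g * g') (m * m') := by
  obtain ⟨ha1, ha2, ha3, ha4⟩ := ha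
  obtain ⟨hb1, hb2, hb3, hb4⟩ := hb
  have hcomp : ∀ x, ExteriorAlgebra.map (a * b).mulVecLin x
      = ExteriorAlgebra.map a.mulVecLin (ExteriorAlgebra.map b.mulVecLin x) := by
    intro x
    rw [Matrix.mulVecLin_mul, ← ExteriorAlgebra.map_comp_map]
    rfl
  refine ⟨?_, ?_, ?_, ?_⟩
  · rw [Matrix.transpose_mul, Matrix.mul_assoc, ← Matrix.mul_assoc aᵀ, ha1, Matrix.one_mul, hb1]
  · rw [Matrix.det_mul, ha2, hb2, one_mul]
  · intro j
    rw [hcomp, hb3, map_sum]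
    simp only [_root_.map_smul, ha3, Finset.smul_sum, smul_smul]
    rw [Finset.sum_comm]
    refine Finset.sum_congr rfl fun k _ => ?_
    rw [Matrix.mul_apply, Finset.sum_smul]
    exact Finset.sum_congr rfl fun i _ => by rw [mul_comm]
  · intro j
    rw [hcomp, hb4, map_sum]
    simp only [_root_.map_smul, ha4, Finset.smul_sum, smul_smul]
    rw [Finset.sum_comm]
    refine Finset.sum_congr rfl fun k _ => ?_
    rw [Matrix.mul_apply, Finset.sum_smul]
    exact Finset.sum_congr rfl fun i _ => by rw [mul_comm]

/-! ### The generators are good -/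

section generators
variable (c s : ℝ)

set_option maxHeartbeats 1600000 in
lemma P3_good (h : c^2+s^2=1) : Good (P3 c s) (rz (c^2-s^2) (2*c*s)) 1 := by
  refine ⟨?_, ?_, red_p _ _ ?_, red_m _ _ ?_⟩
  · ext i j
    rw [Matrix.mul_apply]
    fin_cases i <;> fin_cases j <;>
      · simp [P3, Matrix.transpose_apply, Fin.sum_univ_four, Matrix.one_apply]
        try first | ring1 | linear_combination h
  · simp [P3, Matrix.det_succ_row_zero, Fin.sum_univ_succ]
    simp [Fin.succAbove]
    nlinarith [h]
  · intro j
    fin_cases j <;>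
    · simp only [Fin.sum_univ_three]
      simp only [vp, map_add, map_sub, _root_.map_mul, map_apply_ι, mulVecLin_eps]
      simp [vp, rz, P3, mulVecLin_eps, map_apply_ι, _root_.map_mul, _root_.map_smul, map_add,
        -Matrix.mulVecLin_apply]
      simp only [map_add, _root_.map_smul, add_mul, mul_add, smul_mul_assoc, mul_smul_comm,
        smul_smul, ι_sq_zero, smul_zero, zero_smul, smul_add, smul_neg, neg_smul, zero_add,
        add_zero, zero_mul, mul_zero, neg_mul, mul_neg, neg_neg,
        swap10, swap20, swap30, swap21, swap31, swap32]
      match_scalars <;>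
        first
        | ring1
        | linear_combination h
        | linear_combination (-1:ℝ)*h
        | linear_combination c*h
        | linear_combination s*h
        | linear_combination (-c)*h
        | linear_combination (-s)*h
  · intro j
    fin_cases j <;>
    · simp only [Fin.sum_univ_three]
      simp only [vm, map_add, map_sub, _root_.map_mul, map_apply_ι, mulVecLin_eps]
      simp [vm, P3, Matrix.one_apply, mulVecLin_eps, map_apply_ι, _root_.map_mul,
        _root_.map_smul, map_add, map_sub, -Matrix.mulVecLin_apply]
      simp only [map_add, map_sub, _root_.map_smul, sub_eq_add_neg, add_mul, mul_add,
        smul_mul_assoc, mul_smul_comm, smul_smul, ι_sq_zero, smul_zero, zero_smul, smul_add,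
        smul_neg, neg_smul, zero_add, add_zero, zero_mul, mul_zero, neg_mul, mul_neg, neg_neg,
        neg_add_rev, swap10, swap20, swap30, swap21, swap31, swap32]
      match_scalars <;>
        first
        | ring1
        | linear_combination h
        | linear_combination (-1:ℝ)*h
        | linear_combination c*h
        | linear_combination s*h
        | linear_combination (-c)*h
        | linear_combination (-s)*h

set_option maxHeartbeats 1600000 in
lemma M3_good (h : c^2+s^2=1) : Good (M3 c s) 1 (rz (c^2-s^2) (-(2*c*s))) := by
  refine ⟨?_, ?_, red_p _ _ ?_, red_m _ _ ?_⟩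
  · ext i j
    rw [Matrix.mul_apply]
    fin_cases i <;> fin_cases j <;>
      · simp [M3, Matrix.transpose_apply, Fin.sum_univ_four, Matrix.one_apply]
        try first | ring1 | linear_combination h
  · simp [M3, Matrix.det_succ_row_zero, Fin.sum_univ_succ]
    simp [Fin.succAbove]
    nlinarith [h]
  · intro j
    fin_cases j <;>
    · simp only [Fin.sum_univ_three]
      simp only [vp, map_add, map_sub, _root_.map_mul, map_apply_ι, mulVecLin_eps]
      simp [vp, M3, Matrix.one_apply, mulVecLin_eps, map_apply_ι, _root_.map_mul,
        _root_.map_smul, map_add, -Matrix.mulVecLin_apply]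
      simp only [map_add, _root_.map_smul, add_mul, mul_add, smul_mul_assoc, mul_smul_comm,
        smul_smul, ι_sq_zero, smul_zero, zero_smul, smul_add, smul_neg, neg_smul, zero_add,
        add_zero, zero_mul, mul_zero, neg_mul, mul_neg, neg_neg,
        swap10, swap20, swap30, swap21, swap31, swap32]
      match_scalars <;>
        first
        | ring1
        | linear_combination h
        | linear_combination (-1:ℝ)*h
        | linear_combination c*h
        | linear_combination s*h
        | linear_combination (-c)*h
        | linear_combination (-s)*h
  · intro j
    fin_cases j <;>
    · simp only [Fin.sum_univ_three]
      simp only [vm, map_add, map_sub, _root_.map_mul, map_apply_ι, mulVecLin_eps]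
      simp [vm, rz, M3, mulVecLin_eps, map_apply_ι, _root_.map_mul, _root_.map_smul, map_add,
        map_sub, -Matrix.mulVecLin_apply]
      simp only [map_add, map_sub, _root_.map_smul, sub_eq_add_neg, add_mul, mul_add,
        smul_mul_assoc, mul_smul_comm, smul_smul, ι_sq_zero, smul_zero, zero_smul, smul_add,
        smul_neg, neg_smul, zero_add, add_zero, zero_mul, mul_zero, neg_mul, mul_neg, neg_neg,
        neg_add_rev, swap10, swap20, swap30, swap21, swap31, swap32]
      match_scalars <;>
        first
        | ring1
        | linear_combination h
        | linear_combination (-1:ℝ)*h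
        | linear_combination c*h
        | linear_combination s*h
        | linear_combination (-c)*h
        | linear_combination (-s)*h

set_option maxHeartbeats 1600000 in
lemma P2_good (h : c^2+s^2=1) : Good (P2 c s) (ry (c^2-s^2) (2*c*s)) 1 := by
  refine ⟨?_, ?_, red_p _ _ ?_, red_m _ _ ?_⟩
  · ext i j
    rw [Matrix.mul_apply]
    fin_cases i <;> fin_cases j <;>
      · simp [P2, Matrix.transpose_apply, Fin.sum_univ_four, Matrix.one_apply]
        try first | ring1 | linear_combination h
  · simp [P2, Matrix.det_succ_row_zero, Fin.sum_univ_succ]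
    simp [Fin.succAbove]
    nlinarith [h]
  · intro j
    fin_cases j <;>
    · simp only [Fin.sum_univ_three]
      simp only [vp, map_add, map_sub, _root_.map_mul, map_apply_ι, mulVecLin_eps]
      simp [vp, ry, P2, mulVecLin_eps, map_apply_ι, _root_.map_mul, _root_.map_smul, map_add,
        -Matrix.mulVecLin_apply]
      simp only [map_add, _root_.map_smul, add_mul, mul_add, smul_mul_assoc, mul_smul_comm,
        smul_smul, ι_sq_zero, smul_zero, zero_smul, smul_add, smul_neg, neg_smul, zero_add,
        add_zero, zero_mul, mul_zero, neg_mul, mul_neg, neg_neg,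
        swap10, swap20, swap30, swap21, swap31, swap32]
      match_scalars <;>
        first
        | ring1
        | linear_combination h
        | linear_combination (-1:ℝ)*h
        | linear_combination c*h
        | linear_combination s*h
        | linear_combination (-c)*h
        | linear_combination (-s)*h
  · intro j
    fin_cases j <;>
    · simp only [Fin.sum_univ_three]
      simp only [vm, map_add, map_sub, _root_.map_mul, map_apply_ι, mulVecLin_eps]
      simp [vm, P2, Matrix.one_apply, mulVecLin_eps, map_apply_ι, _root_.map_mul,
        _root_.map_smul, map_add, map_sub, -Matrix.mulVecLin_apply]
      simp only [map_add, map_sub, _root_.map_smul, sub_eq_add_neg, add_mul, mul_add,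
        smul_mul_assoc, mul_smul_comm, smul_smul, ι_sq_zero, smul_zero, zero_smul, smul_add,
        smul_neg, neg_smul, zero_add, add_zero, zero_mul, mul_zero, neg_mul, mul_neg, neg_neg,
        neg_add_rev, swap10, swap20, swap30, swap21, swap31, swap32]
      match_scalars <;>
        first
        | ring1
        | linear_combination h
        | linear_combination (-1:ℝ)*h
        | linear_combination c*h
        | linear_combination s*h
        | linear_combination (-c)*h
        | linear_combination (-s)*h

set_option maxHeartbeats 1600000 in
lemma M2_good (h : c^2+s^2=1) : Good (M2 c s) 1 (ry (c^2-s^2) (-(2*c*s))) := by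
  refine ⟨?_, ?_, red_p _ _ ?_, red_m _ _ ?_⟩
  · ext i j
    rw [Matrix.mul_apply]
    fin_cases i <;> fin_cases j <;>
      · simp [M2, Matrix.transpose_apply, Fin.sum_univ_four, Matrix.one_apply]
        try first | ring1 | linear_combination h
  · simp [M2, Matrix.det_succ_row_zero, Fin.sum_univ_succ]
    simp [Fin.succAbove]
    nlinarith [h]
  · intro j
    fin_cases j <;>
    · simp only [Fin.sum_univ_three]
      simp only [vp, map_add, map_sub, _root_.map_mul, map_apply_ι, mulVecLin_eps]
      simp [vp, M2, Matrix.one_apply, mulVecLin_eps, map_apply_ι, _root_.map_mul,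
        _root_.map_smul, map_add, -Matrix.mulVecLin_apply]
      simp only [map_add, _root_.map_smul, add_mul, mul_add, smul_mul_assoc, mul_smul_comm,
        smul_smul, ι_sq_zero, smul_zero, zero_smul, smul_add, smul_neg, neg_smul, zero_add,
        add_zero, zero_mul, mul_zero, neg_mul, mul_neg, neg_neg,
        swap10, swap20, swap30, swap21, swap31, swap32]
      match_scalars <;>
        first
        | ring1
        | linear_combination h
        | linear_combination (-1:ℝ)*h
        | linear_combination c*h
        | linear_combination s*h
        | linear_combination (-c)*h
        | linear_combination (-s)*h
  · intro j
    fin_cases j <;>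
    · simp only [Fin.sum_univ_three]
      simp only [vm, map_add, map_sub, _root_.map_mul, map_apply_ι, mulVecLin_eps]
      simp [vm, ry, M2, mulVecLin_eps, map_apply_ι, _root_.map_mul, _root_.map_smul, map_add,
        map_sub, -Matrix.mulVecLin_apply]
      simp only [map_add, map_sub, _root_.map_smul, sub_eq_add_neg, add_mul, mul_add,
        smul_mul_assoc, mul_smul_comm, smul_smul, ι_sq_zero, smul_zero, zero_smul, smul_add,
        smul_neg, neg_smul, zero_add, add_zero, zero_mul, mul_zero, neg_mul, mul_neg, neg_neg,
        neg_add_rev, swap10, swap20, swap30, swap21, swap31, swap32]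
      match_scalars <;>
        first
        | ring1
        | linear_combination h
        | linear_combination (-1:ℝ)*h
        | linear_combination c*h
        | linear_combination s*h
        | linear_combination (-c)*h
        | linear_combination (-s)*h

end generators

/-! ### Euler decomposition in SO(3) -/

lemma rz_orth (c s : ℝ) (h : c^2+s^2=1) : (rz c s)ᵀ * rz c s = 1 := by
  ext i j
  rw [Matrix.mul_apply]
  fin_cases i <;> fin_cases j <;>
    · simp [rz, Matrix.transpose_apply, Fin.sum_univ_three, Matrix.one_apply]
      try first | ring1 | linear_combination h

lemma ry_orth (c s : ℝ) (h : c^2+s^2=1) : (ry c s)ᵀ * ry c s = 1 := by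
  ext i j
  rw [Matrix.mul_apply]
  fin_cases i <;> fin_cases j <;>
    · simp [ry, Matrix.transpose_apply, Fin.sum_univ_three, Matrix.one_apply]
      try first | ring1 | linear_combination h

lemma rz_det (c s : ℝ) (h : c^2+s^2=1) : (rz c s).det = 1 := by
  simp [rz, Matrix.det_fin_three]
  linear_combination h

lemma ry_det (c s : ℝ) (h : c^2+s^2=1) : (ry c s).det = 1 := by
  simp [ry, Matrix.det_fin_three]
  linear_combination h

lemma circ (x y r : ℝ) (hr : 0 ≤ r) (h : x^2+y^2=r^2) :
    ∃ c s : ℝ, c^2+s^2=1 ∧ x = r*c ∧ y = r*s := by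
  rcases eq_or_lt_of_le hr with hr0 | hr0
  · refine ⟨1, 0, by norm_num, by nlinarith, by nlinarith⟩
  · have hrne : r ≠ 0 := ne_of_gt hr0
    refine ⟨x/r, y/r, ?_, by field_simp, by field_simp⟩
    field_simp
    linear_combination h

/-- half-angle construction -/
lemma half (C S : ℝ) (h : C^2+S^2=1) :
    ∃ c s : ℝ, c^2+s^2=1 ∧ c^2-s^2=C ∧ 2*c*s=S := by
  by_cases hC : C = -1
  · subst hC
    have hS : S^2 = 0 := by linear_combination h
    have hS0 : S = 0 := by
      have := sq_eq_zero_iff.mp hS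
      exact this
    exact ⟨0, 1, by norm_num, by norm_num, by rw [hS0]; ring⟩
  · have hC1 : C ≥ -1 := by nlinarith [sq_nonneg S]
    have h1 : 0 < 1 + C := by
      rcases lt_or_eq_of_le hC1 with h' | h'
      · linarith
      · exact absurd h'.symm hC
    set c := Real.sqrt ((1+C)/2) with hcdef
    have hc2 : c^2 = (1+C)/2 := Real.sq_sqrt (by linarith)
    have hcpos : 0 < c := Real.sqrt_pos.2 (by linarith)
    have hcne : (2*c) ≠ 0 := by positivity
    refine ⟨c, S/(2*c), ?_, ?_, ?_⟩
    · have hs2 : (S/(2*c))^2 = (1-C)/2 := by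
        rw [div_pow, mul_pow, hc2]
        have hSsq : S^2 = (1-C)*(1+C) := by linear_combination h
        rw [hSsq]
        field_simp
      rw [hs2, hc2]; ring
    · have hs2 : (S/(2*c))^2 = (1-C)/2 := by
        rw [div_pow, mul_pow, hc2]
        have hSsq : S^2 = (1-C)*(1+C) := by linear_combination h
        rw [hSsq]
        field_simp
      rw [hs2, hc2]; ring
    · field_simp

set_option maxHeartbeats 1600000 in
lemma euler (g : Matrix (Fin 3) (Fin 3) ℝ) (h1 : gᵀ * g = 1) (h2 : g.det = 1) :
    ∃ c1 s1 c2 s2 c3 s3 : ℝ, c1^2+s1^2=1 ∧ c2^2+s2^2=1 ∧ c3^2+s3^2=1 ∧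
      g = rz c1 s1 * ry c2 s2 * rz c3 s3 := by
  -- the third column of g is a unit vector
  have hcol : (g 0 2)^2 + (g 1 2)^2 + (g 2 2)^2 = 1 := by
    have := congrFun (congrFun h1 2) 2
    simp [Matrix.mul_apply, Matrix.transpose_apply, Fin.sum_univ_three, Matrix.one_apply] at this
    linear_combination this
  set st := Real.sqrt ((g 0 2)^2 + (g 1 2)^2) with hstdef
  have hstnn : 0 ≤ st := Real.sqrt_nonneg _
  have hst2 : st^2 = (g 0 2)^2 + (g 1 2)^2 := Real.sq_sqrt (by positivity)
  obtain ⟨cφ, sφ, hφ, hx, hy⟩ := circ (g 0 2) (g 1 2) st hstnn (by rw [hst2])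
  set ct := g 2 2 with hctdef
  have hunit2 : ct^2 + st^2 = 1 := by rw [hst2]; linear_combination hcol
  set A := rz cφ sφ * ry ct st with hAdef
  have hA1 : Aᵀ * A = 1 := by
    rw [hAdef, Matrix.transpose_mul, Matrix.mul_assoc, ← Matrix.mul_assoc (rz cφ sφ)ᵀ,
      rz_orth _ _ hφ, Matrix.one_mul, ry_orth _ _ hunit2]
  have hA2 : A * Aᵀ = 1 := mul_eq_one_comm.mp hA1
  have hAmat : A = !![cφ*ct, -sφ, cφ*st; sφ*ct, cφ, sφ*st; -st, 0, ct] := by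
    ext i j
    rw [hAdef, Matrix.mul_apply]
    fin_cases i <;> fin_cases j <;>
      · simp [rz, ry, Fin.sum_univ_three]
        try ring1
  set h := Aᵀ * g with hhdef
  have hAg : A * h = g := by
    rw [hhdef, ← Matrix.mul_assoc, hA2, Matrix.one_mul]
  have hh1 : hᵀ * h = 1 := by
    rw [hhdef, Matrix.transpose_mul, Matrix.transpose_transpose, Matrix.mul_assoc,
      ← Matrix.mul_assoc A, hA2, Matrix.one_mul, h1]
  have hh2 : h * hᵀ = 1 := mul_eq_one_comm.mp hh1
  have hhdet : h.det = 1 := by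
    have hAdet : A.det = 1 := by
      rw [hAdef, Matrix.det_mul, rz_det _ _ hφ, ry_det _ _ hunit2, one_mul]
    rw [hhdef, Matrix.det_mul, Matrix.det_transpose, hAdet, one_mul, h2]
  -- entries of h
  have hentry : ∀ i j, h i j = A 0 i * g 0 j + A 1 i * g 1 j + A 2 i * g 2 j := by
    intro i j
    rw [hhdef, Matrix.mul_apply, Fin.sum_univ_three]
    simp [Matrix.transpose_apply]
  have hc0 : h 0 2 = 0 := by
    rw [hentry, hAmat, hx, hy]
    simp
    linear_combination ct*st*hφ
  have hc1 : h 1 2 = 0 := by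
    rw [hentry, hAmat, hx, hy]
    simp
    ring
  have hc2 : h 2 2 = 1 := by
    rw [hentry, hAmat, hx, hy]
    simp
    linear_combination st^2*hφ + hunit2
  -- the last row of h
  have hrow22 : h 2 0 * h 2 0 + h 2 1 * h 2 1 + h 2 2 * h 2 2 = 1 := by
    have := congrFun (congrFun hh2 2) 2
    simpa [Matrix.mul_apply, Matrix.transpose_apply, Fin.sum_univ_three, Matrix.one_apply]
      using this
  have h20 : h 2 0 = 0 := by
    have e1 : (h 2 0)^2 = 0 := by
      have := sq_nonneg (h 2 1)
      rw [hc2] at hrow22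
      nlinarith [sq_nonneg (h 2 0)]
    exact sq_eq_zero_iff.mp e1
  have h21 : h 2 1 = 0 := by
    have e1 : (h 2 1)^2 = 0 := by
      rw [hc2] at hrow22
      nlinarith [sq_nonneg (h 2 0), sq_nonneg (h 2 1)]
    exact sq_eq_zero_iff.mp e1
  -- the 2x2 block
  have u1 : h 0 0 * h 0 0 + h 1 0 * h 1 0 = 1 := by
    have := congrFun (congrFun hh1 0) 0
    simp [Matrix.mul_apply, Matrix.transpose_apply, Fin.sum_univ_three, Matrix.one_apply,
      h20] at this
    linear_combination this
  have u3 : h 0 0 * h 0 1 + h 1 0 * h 1 1 = 0 := by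
    have := congrFun (congrFun hh1 0) 1
    simp [Matrix.mul_apply, Matrix.transpose_apply, Fin.sum_univ_three, Matrix.one_apply,
      h20, h21] at this
    linear_combination this
  have hdet' : h 0 0 * h 1 1 - h 0 1 * h 1 0 = 1 := by
    have := hhdet
    rw [Matrix.det_fin_three] at this
    rw [hc0, hc1, hc2, h20, h21] at this
    linear_combination this
  have hd : h 1 1 = h 0 0 := by
    linear_combination (-(h 1 1))*u1 + (h 0 0)*hdet' + (h 1 0)*u3
  have hb : h 0 1 = -(h 1 0) := by
    linear_combination (h 0 0)*u3 - (h 1 0)*hdet' - (h 0 1)*u1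
  have hform : h = rz (h 0 0) (h 1 0) := by
    ext i j
    fin_cases i <;> fin_cases j <;>
      simp [rz, hb, hd, hc0, hc1, hc2, h20, h21]
  refine ⟨cφ, sφ, ct, st, h 0 0, h 1 0, hφ, hunit2, by linear_combination u1, ?_⟩
  rw [← hAg, hform, hAdef]
  simp [rz]

/-! ### Main theorem -/

/-- realize any SO(3) element on the plus side -/
lemma plus_real (g : Matrix (Fin 3) (Fin 3) ℝ) (h1 : gᵀ * g = 1) (h2 : g.det = 1) :
    ∃ a : Matrix (Fin 4) (Fin 4) ℝ, Good a g 1 := by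
  obtain ⟨c1, s1, c2, s2, c3, s3, u1, u2, u3, hg⟩ := euler g h1 h2
  obtain ⟨a1, b1, w1, e1, f1⟩ := half c1 s1 u1
  obtain ⟨a2, b2, w2, e2, f2⟩ := half c2 s2 u2
  obtain ⟨a3, b3, w3, e3, f3⟩ := half c3 s3 u3
  have G1 : Good (P3 a1 b1) (rz c1 s1) 1 := by
    rw [← e1, ← f1]; exact P3_good a1 b1 w1
  have G2 : Good (P2 a2 b2) (ry c2 s2) 1 := by
    rw [← e2, ← f2]; exact P2_good a2 b2 w2
  have G3 : Good (P3 a3 b3) (rz c3 s3) 1 := by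
    rw [← e3, ← f3]; exact P3_good a3 b3 w3
  refine ⟨P3 a1 b1 * P2 a2 b2 * P3 a3 b3, ?_⟩
  have := (G1.mul G2).mul G3
  rwa [← hg, Matrix.one_mul, Matrix.one_mul] at this

/-- realize any SO(3) element on the minus side -/
lemma minus_real (g : Matrix (Fin 3) (Fin 3) ℝ) (h1 : gᵀ * g = 1) (h2 : g.det = 1) :
    ∃ a : Matrix (Fin 4) (Fin 4) ℝ, Good a 1 g := by
  obtain ⟨c1, s1, c2, s2, c3, s3, u1, u2, u3, hg⟩ := euler g h1 h2
  obtain ⟨a1, b1, w1, e1, f1⟩ := half c1 (-s1) (by linear_combination u1)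
  obtain ⟨a2, b2, w2, e2, f2⟩ := half c2 (-s2) (by linear_combination u2)
  obtain ⟨a3, b3, w3, e3, f3⟩ := half c3 (-s3) (by linear_combination u3)
  have G1 : Good (M3 a1 b1) 1 (rz c1 s1) := by
    have : s1 = -(2*a1*b1) := by linarith [f1]
    rw [this, ← e1]; exact M3_good a1 b1 w1
  have G2 : Good (M2 a2 b2) 1 (ry c2 s2) := by
    have : s2 = -(2*a2*b2) := by linarith [f2]
    rw [this, ← e2]; exact M2_good a2 b2 w2
  have G3 : Good (M3 a3 b3) 1 (rz c3 s3) := by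
    have : s3 = -(2*a3*b3) := by linarith [f3]
    rw [this, ← e3]; exact M3_good a3 b3 w3
  refine ⟨M3 a1 b1 * M2 a2 b2 * M3 a3 b3, ?_⟩
  have := (G1.mul G2).mul G3
  rwa [← hg, Matrix.one_mul, Matrix.one_mul] at this

/-- The homomorphism `ι : SO(4) → SO(3) × SO(3)`, `ι(a) = (a₊, a₋)`, is surjective:
for all `g₊, g₋ ∈ SO(3)` there is `a ∈ SO(4)` whose induced map `⋀²a` acts on the
bases `E⁺` and `E⁻` of `Λ⁺` and `Λ⁻` by the matrices `g₊` and `g₋` respectively. -/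
theorem iota_surjective (gp gm : Matrix (Fin 3) (Fin 3) ℝ)
    (hgp₁ : gpᵀ * gp = 1) (hgp₂ : gp.det = 1) (hgm₁ : gmᵀ * gm = 1) (hgm₂ : gm.det = 1) :
    ∃ a : Matrix (Fin 4) (Fin 4) ℝ, aᵀ * a = 1 ∧ a.det = 1 ∧
      (∀ j, ExteriorAlgebra.map a.mulVecLin (Ep j) = ∑ i, gp i j • Ep i) ∧
      (∀ j, ExteriorAlgebra.map a.mulVecLin (Em j) = ∑ i, gm i j • Em i) := by
  obtain ⟨ap, hap⟩ := plus_real gp hgp₁ hgp₂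
  obtain ⟨am, ham⟩ := minus_real gm hgm₁ hgm₂
  have := hap.mul ham
  rw [Matrix.mul_one, Matrix.one_mul] at this
  exact ⟨ap * am, this⟩
end
end

section
/- The kernel of the homomorphism ι : SO(4) → SO(3)×SO(3) is {I₄, −I₄}: if a ∈ SO(4) satisfies ⋀²a(Eᵢ⁺) = Eᵢ⁺ and ⋀²a(Eᵢ⁻) = Eᵢ⁻ for all i ∈ {1,2,3} (equivalently, ⋀²a is the identity on ⋀²ℝ⁴), then a = I₄ or a = −I₄. Hence ι is a 2-to-1 covering homomorphism. -/
noncomputable section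

open ExteriorAlgebra Matrix

/-- The `(k,l)` 2×2 minor, as an alternating map `(ℝ⁴)² → ℝ`. -/
def minorAlt (k l : Fin 4) : (Fin 4 → ℝ) [⋀^Fin 2]→ₗ[ℝ] ℝ :=
  (Matrix.detRowAlternating).compLinearMap (LinearMap.pi fun m => LinearMap.proj (![k, l] m))

theorem minor_apply (k l : Fin 4) (v w : Fin 4 → ℝ) :
    minorAlt k l ![v, w] = v k * w l - v l * w k := by
  have h : minorAlt k l ![v, w] = Matrix.det (Matrix.of ![![v k, v l], ![w k, w l]]) := by
    rw [minorAlt, AlternatingMap.compLinearMap_apply]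
    show Matrix.det _ = _
    congr 1
    ext i m
    fin_cases i <;> fin_cases m <;> simp
  rw [h, Matrix.det_fin_two_of]

/-- The linear functional on `⋀ℝ⁴` extracting the coefficient of `ε k ∧ ε l` in degree 2. -/
def φ (k l : Fin 4) : ExteriorAlgebra ℝ (Fin 4 → ℝ) →ₗ[ℝ] ℝ :=
  liftAlternating (fun n => match n with | 2 => minorAlt k l | _ => 0)

theorem phi_mul (k l : Fin 4) (v w : Fin 4 → ℝ) :
    φ k l (ι ℝ v * ι ℝ w) = v k * w l - v l * w k := by
  rw [φ, liftAlternating_ι_mul, liftAlternating_ι]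
  show (minorAlt k l).curryLeft v ![w] = _
  rw [AlternatingMap.curryLeft_apply_apply]
  exact minor_apply k l v w

theorem pair_add (a : Matrix (Fin 4) (Fin 4) ℝ) (i j i' j' : Fin 4)
    (h : ExteriorAlgebra.map a.mulVecLin
        ((Real.sqrt 2)⁻¹ • (ι ℝ (ε i) * ι ℝ (ε j) + ι ℝ (ε i') * ι ℝ (ε j')))
      = (Real.sqrt 2)⁻¹ • (ι ℝ (ε i) * ι ℝ (ε j) + ι ℝ (ε i') * ι ℝ (ε j')))
    (k l : Fin 4) :
    (a k i * a l j - a l i * a k j) + (a k i' * a l j' - a l i' * a k j')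
      = (ε i k * ε j l - ε i l * ε j k) + (ε i' k * ε j' l - ε i' l * ε j' k) := by
  rw [_root_.map_smul, _root_.map_add, _root_.map_mul, _root_.map_mul, map_apply_ι, map_apply_ι,
    map_apply_ι, map_apply_ι] at h
  have h2 := smul_right_injective (ExteriorAlgebra ℝ (Fin 4 → ℝ))
    (inv_ne_zero (by positivity : Real.sqrt 2 ≠ 0)) h
  have h3 := congrArg (φ k l) h2
  simp only [_root_.map_add, phi_mul, Matrix.mulVecLin_apply] at h3
  simpa [ε, Matrix.mulVec_single] using h3

theorem pair_sub (a : Matrix (Fin 4) (Fin 4) ℝ) (i j i' j' : Fin 4)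
    (h : ExteriorAlgebra.map a.mulVecLin
        ((Real.sqrt 2)⁻¹ • (ι ℝ (ε i) * ι ℝ (ε j) - ι ℝ (ε i') * ι ℝ (ε j')))
      = (Real.sqrt 2)⁻¹ • (ι ℝ (ε i) * ι ℝ (ε j) - ι ℝ (ε i') * ι ℝ (ε j')))
    (k l : Fin 4) :
    (a k i * a l j - a l i * a k j) - (a k i' * a l j' - a l i' * a k j')
      = (ε i k * ε j l - ε i l * ε j k) - (ε i' k * ε j' l - ε i' l * ε j' k) := by
  rw [_root_.map_smul, _root_.map_sub, _root_.map_mul, _root_.map_mul, map_apply_ι, map_apply_ι,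
    map_apply_ι, map_apply_ι] at h
  have h2 := smul_right_injective (ExteriorAlgebra ℝ (Fin 4 → ℝ))
    (inv_ne_zero (by positivity : Real.sqrt 2 ≠ 0)) h
  have h3 := congrArg (φ k l) h2
  simp only [_root_.map_sub, phi_mul, Matrix.mulVecLin_apply] at h3
  simpa [ε, Matrix.mulVec_single] using h3

/-- The kernel of `ι : SO(4) → SO(3) × SO(3)` is `{I₄, −I₄}`: if `a ∈ SO(4)` is such
that `⋀²a` fixes every `Eᵢ⁺` and every `Eᵢ⁻`, then `a = I₄` or `a = −I₄`. -/
theorem iota_kernel (a : Matrix (Fin 4) (Fin 4) ℝ)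
    (ha₁ : aᵀ * a = 1) (ha₂ : a.det = 1)
    (hp : ∀ i, ExteriorAlgebra.map a.mulVecLin (Ep i) = Ep i)
    (hm : ∀ i, ExteriorAlgebra.map a.mulVecLin (Em i) = Em i) :
    a = 1 ∨ a = -1 := by
  have O : ∀ i j : Fin 4, a 0 i * a 0 j + a 1 i * a 1 j + a 2 i * a 2 j + a 3 i * a 3 j
      = if i = j then 1 else 0 := by
    intro i j
    have h := congrFun (congrFun ha₁ i) j
    simpa [Matrix.mul_apply, Fin.sum_univ_four, Matrix.one_apply] using h
  have A0 := pair_add a 0 1 2 3 (hp 0)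
  have A1 := pair_add a 0 2 3 1 (hp 1)
  have A2 := pair_add a 0 3 1 2 (hp 2)
  have B0 := pair_sub a 0 1 2 3 (hm 0)
  have B1 := pair_sub a 0 2 3 1 (hm 1)
  have B2 := pair_sub a 0 3 1 2 (hm 2)
  have P01 : ∀ k l, a k 0 * a l 1 - a l 0 * a k 1 = ε 0 k * ε 1 l - ε 0 l * ε 1 k :=
    fun k l => by linear_combination (A0 k l + B0 k l) / 2
  have P23 : ∀ k l, a k 2 * a l 3 - a l 2 * a k 3 = ε 2 k * ε 3 l - ε 2 l * ε 3 k :=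
    fun k l => by linear_combination (A0 k l - B0 k l) / 2
  have P02 : ∀ k l, a k 0 * a l 2 - a l 0 * a k 2 = ε 0 k * ε 2 l - ε 0 l * ε 2 k :=
    fun k l => by linear_combination (A1 k l + B1 k l) / 2
  have P31 : ∀ k l, a k 3 * a l 1 - a l 3 * a k 1 = ε 3 k * ε 1 l - ε 3 l * ε 1 k :=
    fun k l => by linear_combination (A1 k l - B1 k l) / 2
  have P03 : ∀ k l, a k 0 * a l 3 - a l 0 * a k 3 = ε 0 k * ε 3 l - ε 0 l * ε 3 k :=
    fun k l => by linear_combination (A2 k l + B2 k l) / 2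
  have P12 : ∀ k l, a k 1 * a l 2 - a l 1 * a k 2 = ε 1 k * ε 2 l - ε 1 l * ε 2 k :=
    fun k l => by linear_combination (A2 k l - B2 k l) / 2
  have O00 := O 0 0
  have O11 := O 1 1
  have O22 := O 2 2
  have O33 := O 3 3
  have O01 := O 0 1
  have O02 := O 0 2
  have O03 := O 0 3
  have O12 := O 1 2
  have O13 := O 1 3
  have O23 := O 2 3
  simp (config := { decide := true }) at O00 O11 O22 O33 O01 O02 O03 O12 O13 O23
  have z10 : a 1 0 = 0 := by
    have h0 := P02 1 0
    have h1 := P02 1 2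
    have h2 := P02 1 3
    simp (config := { decide := true }) [ε, Pi.single_apply] at h0 h1 h2
    linear_combination a 0 2 * h0 + a 2 2 * h1 + a 3 2 * h2 + a 1 2 * O02 - a 1 0 * O22
  have z20 : a 2 0 = 0 := by
    have h0 := P01 2 0
    have h1 := P01 2 1
    have h2 := P01 2 3
    simp (config := { decide := true }) [ε, Pi.single_apply] at h0 h1 h2
    linear_combination a 0 1 * h0 + a 1 1 * h1 + a 3 1 * h2 + a 2 1 * O01 - a 2 0 * O11
  have z30 : a 3 0 = 0 := by
    have h0 := P01 3 0
    have h1 := P01 3 1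
    have h2 := P01 3 2
    simp (config := { decide := true }) [ε, Pi.single_apply] at h0 h1 h2
    linear_combination a 0 1 * h0 + a 1 1 * h1 + a 2 1 * h2 + a 3 1 * O01 - a 3 0 * O11
  have z01 : a 0 1 = 0 := by
    have h0 := P12 0 1
    have h1 := P12 0 2
    have h2 := P12 0 3
    simp (config := { decide := true }) [ε, Pi.single_apply] at h0 h1 h2
    linear_combination a 1 2 * h0 + a 2 2 * h1 + a 3 2 * h2 + a 0 2 * O12 - a 0 1 * O22
  have z21 : a 2 1 = 0 := by
    have h0 := P01 0 2
    have h1 := P01 1 2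
    have h2 := P01 3 2
    simp (config := { decide := true }) [ε, Pi.single_apply] at h0 h1 h2
    linear_combination a 0 0 * h0 + a 1 0 * h1 + a 3 0 * h2 + a 2 0 * O01 - a 2 1 * O00
  have z31 : a 3 1 = 0 := by
    have h0 := P01 0 3
    have h1 := P01 1 3
    have h2 := P01 2 3
    simp (config := { decide := true }) [ε, Pi.single_apply] at h0 h1 h2
    linear_combination a 0 0 * h0 + a 1 0 * h1 + a 2 0 * h2 + a 3 0 * O01 - a 3 1 * O00
  have z02 : a 0 2 = 0 := by
    have h0 := P12 1 0
    have h1 := P12 2 0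
    have h2 := P12 3 0
    simp (config := { decide := true }) [ε, Pi.single_apply] at h0 h1 h2
    linear_combination a 1 1 * h0 + a 2 1 * h1 + a 3 1 * h2 + a 0 1 * O12 - a 0 2 * O11
  have z12 : a 1 2 = 0 := by
    have h0 := P02 0 1
    have h1 := P02 2 1
    have h2 := P02 3 1
    simp (config := { decide := true }) [ε, Pi.single_apply] at h0 h1 h2
    linear_combination a 0 0 * h0 + a 2 0 * h1 + a 3 0 * h2 + a 1 0 * O02 - a 1 2 * O00
  have z32 : a 3 2 = 0 := by
    have h0 := P02 0 3
    have h1 := P02 1 3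
    have h2 := P02 2 3
    simp (config := { decide := true }) [ε, Pi.single_apply] at h0 h1 h2
    linear_combination a 0 0 * h0 + a 1 0 * h1 + a 2 0 * h2 + a 3 0 * O02 - a 3 2 * O00
  have z03 : a 0 3 = 0 := by
    have h0 := P31 0 1
    have h1 := P31 0 2
    have h2 := P31 0 3
    simp (config := { decide := true }) [ε, Pi.single_apply] at h0 h1 h2
    linear_combination a 1 1 * h0 + a 2 1 * h1 + a 3 1 * h2 + a 0 1 * O13 - a 0 3 * O11
  have z13 : a 1 3 = 0 := by
    have h0 := P03 0 1
    have h1 := P03 2 1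
    have h2 := P03 3 1
    simp (config := { decide := true }) [ε, Pi.single_apply] at h0 h1 h2
    linear_combination a 0 0 * h0 + a 2 0 * h1 + a 3 0 * h2 + a 1 0 * O03 - a 1 3 * O00
  have z23 : a 2 3 = 0 := by
    have h0 := P03 0 2
    have h1 := P03 1 2
    have h2 := P03 3 2
    simp (config := { decide := true }) [ε, Pi.single_apply] at h0 h1 h2
    linear_combination a 0 0 * h0 + a 1 0 * h1 + a 3 0 * h2 + a 2 0 * O03 - a 2 3 * O00
  have d1 : a 0 0 * a 1 1 = 1 := by
    have h := P01 0 1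
    simp (config := { decide := true }) [ε, Pi.single_apply] at h
    linear_combination h + a 0 1 * z10
  have d2 : a 0 0 * a 2 2 = 1 := by
    have h := P02 0 2
    simp (config := { decide := true }) [ε, Pi.single_apply] at h
    linear_combination h + a 0 2 * z20
  have d3 : a 0 0 * a 3 3 = 1 := by
    have h := P03 0 3
    simp (config := { decide := true }) [ε, Pi.single_apply] at h
    linear_combination h + a 0 3 * z30
  have h00sq : a 0 0 * a 0 0 = 1 := by
    linear_combination O00 - a 1 0 * z10 - a 2 0 * z20 - a 3 0 * z30
  have d1' : a 1 1 = a 0 0 := by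
    linear_combination a 0 0 * d1 - a 1 1 * h00sq
  have d2' : a 2 2 = a 0 0 := by
    linear_combination a 0 0 * d2 - a 2 2 * h00sq
  have d3' : a 3 3 = a 0 0 := by
    linear_combination a 0 0 * d3 - a 3 3 * h00sq
  have hA : a = a 0 0 • (1 : Matrix (Fin 4) (Fin 4) ℝ) := by
    ext i j
    fin_cases i <;> fin_cases j <;>
      simp [Matrix.one_apply, z10, z20, z30, z01, z21, z31, z02, z12, z32, z03, z13, z23, d1', d2', d3']
  rcases mul_self_eq_one_iff.mp h00sq with h | h
  · left; rw [hA, h, one_smul]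
  · right; rw [hA, h, neg_smul, one_smul]
end
end

section
/- Let B be a 3×3 real matrix. Then the (1,2), (1,3), (2,2), (2,3), (3,2) and (3,3) entries of hᵀBg vanish for all pairs g, h ∈ SO(3) if and only if B = 0. -/
open Matrix

/-- For a `3×3` real matrix `B`, the `(1,2)`, `(1,3)`, `(2,2)`, `(2,3)`, `(3,2)` and
`(3,3)` entries of `hᵀBg` vanish for all `g, h ∈ SO(3)` if and only if `B = 0`. -/
theorem entries_vanish_iff_zero (B : Matrix (Fin 3) (Fin 3) ℝ) :
    (∀ g h : Matrix (Fin 3) (Fin 3) ℝ, gᵀ * g = 1 → g.det = 1 → hᵀ * h = 1 → h.det = 1 →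
      (hᵀ * B * g) 0 1 = 0 ∧ (hᵀ * B * g) 0 2 = 0 ∧
      (hᵀ * B * g) 1 1 = 0 ∧ (hᵀ * B * g) 1 2 = 0 ∧
      (hᵀ * B * g) 2 1 = 0 ∧ (hᵀ * B * g) 2 2 = 0) ↔
    B = 0 := by
  constructor
  · intro hvan
    have h1 := hvan 1 1 (by simp) (by simp) (by simp) (by simp)
    set P : Matrix (Fin 3) (Fin 3) ℝ := !![0,1,0;0,0,1;1,0,0] with hP
    have hPo : Pᵀ * P = 1 := by
      ext i j
      fin_cases i <;> fin_cases j <;>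
        simp [hP, Matrix.mul_apply, Fin.sum_univ_three, Matrix.one_apply, Matrix.vecHead, Matrix.vecTail]
    have hPd : P.det = 1 := by
      simp [hP, Matrix.det_fin_three]
    have h2 := hvan P 1 hPo hPd (by simp) (by simp)
    simp only [Matrix.transpose_one, Matrix.one_mul, Matrix.mul_one] at h1 h2
    obtain ⟨a1, a2, a3, a4, a5, a6⟩ := h1
    obtain ⟨b1, b2, b3, b4, b5, b6⟩ := h2
    have e1 : (B * P) 0 1 = B 0 0 := by
      simp [hP, Matrix.mul_apply, Fin.sum_univ_three, Matrix.vecHead, Matrix.vecTail]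
    have e2 : (B * P) 1 1 = B 1 0 := by
      simp [hP, Matrix.mul_apply, Fin.sum_univ_three, Matrix.vecHead, Matrix.vecTail]
    have e3 : (B * P) 2 1 = B 2 0 := by
      simp [hP, Matrix.mul_apply, Fin.sum_univ_three, Matrix.vecHead, Matrix.vecTail]
    ext i j
    fin_cases i <;> fin_cases j <;>
      simp_all [e1, e2, e3, Matrix.vecHead, Matrix.vecTail]
  · rintro rfl
    intro g h _ _ _ _
    simp
end
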